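/- Let W = (x₀, …, x_{n-1}) be a walk in Δ from u to v, and let Γ = GenCov(Δ,G,ω,ζ). Define the voltage of W as the subset ζ(W) = ζ(x_{n-1})ω(v_{n-1}) · ζ(x_{n-2})ω(v_{n-2}) ⋯ ζ(x₀)ω(v₀) of G, where v_i = beg x_i. Then the set of final vertices of walks in Γ of length n that start at (u, ω(u)) and project to W under the covering projection is exactly {(v, ω(v)z) : z ∈ ζ(W)}. -/
import Mathlib


/-- A graph in the sense of Malnič–Nedela–Škoviera: vertices, darts,
an initial-vertex function and an involutory dart-reversal. -/
structure PreGraph (V D : Type*) where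
  beg : D → V
  inv : D → D
  inv_inv : ∀ x, inv (inv x) = x

/-- The terminal vertex of a dart. -/
def PreGraph.term {V D : Type*} (Δ : PreGraph V D) (x : D) : V := Δ.beg (Δ.inv x)

/-- A generalised voltage graph on a graph `Δ`: a weight function
(given on vertices by `ωv` and on darts by `ωd`) and a voltage assignment `ζ`
satisfying the three defining conditions. -/
structure GenVoltage (V D : Type*) (G : Type*) [Group G] (Δ : PreGraph V D) where
  ωv : V → Subgroup G
  ωd : D → Subgroup G
  ζ : D → G
  wle : ∀ x, ωd x ≤ ωv (Δ.beg x)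
  wconj : ∀ x g, g ∈ ωd x ↔ ζ x * g * (ζ x)⁻¹ ∈ ωd (Δ.inv x)
  wcyc : ∀ x, ζ (Δ.inv x) * ζ x ∈ ωd x

namespace GenVoltage

variable {V D G : Type*} [Group G] {Δ : PreGraph V D} (Θ : GenVoltage V D G Δ)

/-- Vertices of the generalised cover: pairs `(v, ω(v)g)` of a vertex of `Δ`
and a right coset of its weight group. -/
abbrev CovV := Σ v : V, Quotient (QuotientGroup.rightRel (Θ.ωv v))

/-- Darts of the generalised cover: pairs `(x, ω(x)g)`. -/
abbrev CovD := Σ x : D, Quotient (QuotientGroup.rightRel (Θ.ωd x))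

/-- The cover vertex `(v, ω(v)g)`. -/
def vmk (v : V) (g : G) : Θ.CovV := ⟨v, Quotient.mk _ g⟩

/-- The cover dart `(x, ω(x)g)`. -/
def dmk (x : D) (g : G) : Θ.CovD := ⟨x, Quotient.mk _ g⟩

/-- `beg` of the cover: `(x, ω(x)g) ↦ (beg x, ω(beg x)g)`. -/
def covBeg : Θ.CovD → Θ.CovV :=
  fun p => ⟨Δ.beg p.1, Quotient.map id (fun g h hgh => by
    have h1 : h * g⁻¹ ∈ Θ.ωd p.1 := QuotientGroup.rightRel_apply.mp hgh
    exact QuotientGroup.rightRel_apply.mpr (Θ.wle p.1 h1)) p.2⟩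

/-- `inv` of the cover: `(x, ω(x)g) ↦ (x⁻¹, ω(x⁻¹)ζ(x)g)`. -/
def covInv : Θ.CovD → Θ.CovD :=
  fun p => ⟨Δ.inv p.1, Quotient.map (fun g => Θ.ζ p.1 * g) (fun g h hgh => by
    have h1 : h * g⁻¹ ∈ Θ.ωd p.1 := QuotientGroup.rightRel_apply.mp hgh
    have h2 := (Θ.wconj p.1 (h * g⁻¹)).1 h1
    exact QuotientGroup.rightRel_apply.mpr (by simpa [mul_assoc, mul_inv_rev] using h2)) p.2⟩

/-- Terminal vertex of a cover dart. -/
def covTerm : Θ.CovD → Θ.CovV := fun p => Θ.covBeg (Θ.covInv p)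

/-- Right translation by `h` on the cover: `(x, ω(x)g) ↦ (x, ω(x)gh)`, on vertices. -/
def covRightV (h : G) : Θ.CovV → Θ.CovV :=
  fun p => ⟨p.1, Quotient.map (fun g => g * h) (fun a b hab => by
    have h1 := QuotientGroup.rightRel_apply.mp hab
    exact QuotientGroup.rightRel_apply.mpr (by simpa [mul_assoc, mul_inv_rev] using h1)) p.2⟩

/-- Right translation by `h` on the cover, on darts. -/
def covRightD (h : G) : Θ.CovD → Θ.CovD :=
  fun p => ⟨p.1, Quotient.map (fun g => g * h) (fun a b hab => by
    have h1 := QuotientGroup.rightRel_apply.mp hab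
    exact QuotientGroup.rightRel_apply.mpr (by simpa [mul_assoc, mul_inv_rev] using h1)) p.2⟩

end GenVoltage

/-- Walks with respect to abstract initial/terminal vertex functions `B`, `T`:
`WalkBT B T u v l` means `l` is a walk from `u` to `v`. -/
inductive WalkBT {Vt Dt : Type*} (B T : Dt → Vt) : Vt → Vt → List Dt → Prop
  | nil (v : Vt) : WalkBT B T v v []
  | cons (x : Dt) {v : Vt} {l : List Dt} :
      WalkBT B T (T x) v l → WalkBT B T (B x) v (x :: l)


open scoped Pointwise in
/-- The voltage of a walk `(x₀, …, x_{n-1})`: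
`ζ(W) = ζ(x_{n-1})ω(v_{n-1}) ⋯ ζ(x₀)ω(v₀)` as a subset of `G`. -/
def wvolt {V D G : Type*} [Group G] {Δ : PreGraph V D} (Θ : GenVoltage V D G Δ) :
    List D → Set G
  | [] => {1}
  | x :: l => wvolt Θ l * ((Θ.ζ x) • (Θ.ωv (Δ.beg x) : Set G))

theorem WalkBT.nil_inv {Vt Dt : Type*} {B T : Dt → Vt} {s t : Vt}
    (h : WalkBT B T s t []) : s = t := by
  cases h; rfl

theorem WalkBT.cons_inv {Vt Dt : Type*} {B T : Dt → Vt} {s t : Vt} {d : Dt} {L : List Dt}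
    (h : WalkBT B T s t (d :: L)) : s = B d ∧ WalkBT B T (T d) t L := by
  cases h; exact ⟨rfl, by assumption⟩

theorem GenVoltage.vmk_eq_iff {V D G : Type*} [Group G] {Δ : PreGraph V D}
    (Θ : GenVoltage V D G Δ) (w : V) (a b : G) :
    Θ.vmk w a = Θ.vmk w b ↔ b * a⁻¹ ∈ Θ.ωv w := by
  rw [GenVoltage.vmk, GenVoltage.vmk, Sigma.mk.inj_iff, heq_eq_eq]
  simp only [true_and, Quotient.eq]
  exact QuotientGroup.rightRel_apply

theorem GenVoltage.covBeg_dmk {V D G : Type*} [Group G] {Δ : PreGraph V D}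
    (Θ : GenVoltage V D G Δ) (x : D) (h : G) :
    Θ.covBeg (Θ.dmk x h) = Θ.vmk (Δ.beg x) h := rfl

theorem GenVoltage.covTerm_dmk {V D G : Type*} [Group G] {Δ : PreGraph V D}
    (Θ : GenVoltage V D G Δ) (x : D) (h : G) :
    Θ.covTerm (Θ.dmk x h) = Θ.vmk (Δ.term x) (Θ.ζ x * h) := rfl

open scoped Pointwise in
theorem stmt_aux {V D G : Type*} [Group G] {Δ : PreGraph V D}
    (Θ : GenVoltage V D G Δ) {u v : V} {l : List D}
    (hW : WalkBT Δ.beg Δ.term u v l) (g : G) :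
    {q : Θ.CovV | ∃ L : List Θ.CovD,
        WalkBT Θ.covBeg Θ.covTerm (Θ.vmk u g) q L ∧ L.map Sigma.fst = l} =
    {q : Θ.CovV | ∃ z ∈ wvolt Θ l, q = Θ.vmk v (z * g)} := by
  induction hW generalizing g with
  | nil w =>
    ext q
    simp only [Set.mem_setOf_eq, wvolt]
    constructor
    · rintro ⟨L, hL, hmap⟩
      have : L = [] := by simpa using hmap
      subst this
      exact ⟨1, rfl, by simpa using hL.nil_inv.symm⟩
    · rintro ⟨z, hz, rfl⟩
      simp only [Set.mem_singleton_iff] at hz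
      subst hz
      exact ⟨[], by simpa using WalkBT.nil (Θ.vmk w g), rfl⟩
  | @cons x v' l' hW' ih =>
    ext q
    simp only [Set.mem_setOf_eq, wvolt]
    constructor
    · rintro ⟨L, hL, hmap⟩
      cases L with
      | nil => simp at hmap
      | cons d L' =>
        simp only [List.map_cons, List.cons.injEq] at hmap
        obtain ⟨hd, hmap'⟩ := hmap
        obtain ⟨x', c⟩ := d
        cases (show x' = x from hd)
        induction c using Quotient.inductionOn with
        | h h =>
        obtain ⟨hbeg, hL'⟩ := hL.cons_inv
        rw [show (⟨x, Quotient.mk _ h⟩ : Θ.CovD) = Θ.dmk x h from rfl] at hbeg hL'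
        rw [Θ.covBeg_dmk] at hbeg
        rw [Θ.covTerm_dmk] at hL'
        have hw : h * g⁻¹ ∈ Θ.ωv (Δ.beg x) := (Θ.vmk_eq_iff _ _ _).mp hbeg
        have hq : q ∈ {q : Θ.CovV | ∃ z ∈ wvolt Θ l', q = Θ.vmk v' (z * (Θ.ζ x * h))} := by
          rw [← ih (Θ.ζ x * h)]
          exact ⟨L', hL', hmap'⟩
        obtain ⟨z, hz, rfl⟩ := hq
        refine ⟨z * (Θ.ζ x * (h * g⁻¹)), Set.mul_mem_mul hz ?_, ?_⟩
        · exact Set.smul_mem_smul_set hw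
        · rw [GenVoltage.vmk, GenVoltage.vmk]
          congr 1
          group
    · rintro ⟨z', hz', rfl⟩
      rw [Set.mem_mul] at hz'
      obtain ⟨z, hz, b, hb, rfl⟩ := hz'
      obtain ⟨w, hw, rfl⟩ := Set.mem_smul_set.mp hb
      have hq : Θ.vmk v' (z * (Θ.ζ x • w) * g) ∈ {q : Θ.CovV | ∃ L,
          WalkBT Θ.covBeg Θ.covTerm (Θ.vmk (Δ.term x) (Θ.ζ x * (w * g))) q L ∧
          L.map Sigma.fst = l'} := by
        rw [ih (Θ.ζ x * (w * g))]
        refine ⟨z, hz, ?_⟩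
        rw [GenVoltage.vmk, GenVoltage.vmk]
        congr 2
        simp only [smul_eq_mul]
        group
      obtain ⟨L', hL', hmap'⟩ := hq
      refine ⟨Θ.dmk x (w * g) :: L', ?_, by simp [GenVoltage.dmk, hmap']⟩
      have hb2 : Θ.covBeg (Θ.dmk x (w * g)) = Θ.vmk (Δ.beg x) g := by
        rw [Θ.covBeg_dmk, Θ.vmk_eq_iff]
        simpa [mul_inv_rev, mul_assoc] using (Θ.ωv (Δ.beg x)).inv_mem hw
      rw [← hb2]
      exact WalkBT.cons _ (by rw [Θ.covTerm_dmk]; exact hL')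
/-- The final vertices of lifts of a `uv`-walk `W` starting at `(u, ω(u))` are
exactly the vertices `(v, ω(v)z)` with `z ∈ ζ(W)`. -/
theorem stmt_13 {V D G : Type*} [Group G] {Δ : PreGraph V D}
    (Θ : GenVoltage V D G Δ) (u v : V) (l : List D)
    (hW : WalkBT Δ.beg Δ.term u v l) :
    {q : Θ.CovV | ∃ L : List Θ.CovD,
        WalkBT Θ.covBeg Θ.covTerm (Θ.vmk u 1) q L ∧ L.map Sigma.fst = l} =
    {q : Θ.CovV | ∃ z ∈ wvolt Θ l, q = Θ.vmk v z} := by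
  rw [stmt_aux Θ hW 1]
  simp only [mul_one]
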